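/- Let A = (a_{ij}) be an n×n real matrix such that D(A) belongs to the class 𝒟, D(A) is strongly connected, and Δ_A ≠ 0, and write A^# = (α_{ij}). If vertices i and j are maximally matchable in D(A), then α_{ij} ≠ 0. -/

import Mathlib

open Matrix

/-- Adjacency in a digraph given by relation `G`: a 2-cycle between distinct `i` and `j`. -/
def Adjd {n : ℕ} (G : Fin n → Fin n → Prop) (i j : Fin n) : Prop :=
  i ≠ j ∧ G i j ∧ G j i

/-- `G` is a simple symmetric digraph: no loops and edges come in both directions. -/
def IsSSD {n : ℕ} (G : Fin n → Fin n → Prop) : Prop :=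
  (∀ i, ¬ G i i) ∧ ∀ i j, G i j → G j i

/-- A vertex is pendant if it is incident to exactly one 2-cycle. -/
def Pendant {n : ℕ} (G : Fin n → Fin n → Prop) (i : Fin n) : Prop :=
  ∃! j, Adjd G i j

/-- The class 𝒟: simple symmetric digraphs in which every non-pendant vertex is
adjacent to at least one pendant vertex. -/
def InClassD {n : ℕ} (G : Fin n → Fin n → Prop) : Prop :=
  IsSSD G ∧ ∀ i, ¬ Pendant G i → ∃ j, Adjd G i j ∧ Pendant G j

/-- Strong connectivity: a directed path from every vertex to every other vertex. -/
def StronglyConnected {n : ℕ} (G : Fin n → Fin n → Prop) : Prop :=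
  ∀ i j : Fin n, Relation.ReflTransGen G i j

/-- An unordered pair `e` is a 2-cycle of `G`. -/
def IsEdge {n : ℕ} (G : Fin n → Fin n → Prop) (e : Sym2 (Fin n)) : Prop :=
  ∃ i j, e = s(i, j) ∧ Adjd G i j

/-- A matching: a set of pairwise vertex-disjoint 2-cycles. -/
def IsMatching {n : ℕ} (G : Fin n → Fin n → Prop) (M : Finset (Sym2 (Fin n))) : Prop :=
  (∀ e ∈ M, IsEdge G e) ∧
  ∀ e ∈ M, ∀ f ∈ M, e ≠ f → ∀ v : Fin n, v ∈ e → v ∉ f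

/-- A maximum matching: a matching of maximum cardinality. -/
def IsMaxMatching {n : ℕ} (G : Fin n → Fin n → Prop) (M : Finset (Sym2 (Fin n))) : Prop :=
  IsMatching G M ∧ ∀ M', IsMatching G M' → M'.card ≤ M.card

/-- A cycle chain, recorded by its list of (distinct) vertices `i₁, …, i_{m+1}`. -/
def IsCycleChain {n : ℕ} (G : Fin n → Fin n → Prop) (c : List (Fin n)) : Prop :=
  c.Nodup ∧ 2 ≤ c.length ∧ c.Chain' (Adjd G)

/-- A cycle chain from `i` to `j`. -/
def IsCycleChainBtw {n : ℕ} (G : Fin n → Fin n → Prop) (i j : Fin n) (c : List (Fin n)) : Prop :=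
  IsCycleChain G c ∧ c.head? = some i ∧ c.getLast? = some j

/-- The list of 2-cycles of a cycle chain. -/
def chainEdges {n : ℕ} (c : List (Fin n)) : List (Sym2 (Fin n)) :=
  List.zipWith (fun a b => s(a, b)) c c.tail

/-- The cycle chain `c` is alternating with respect to `M`: its 2-cycles are alternately
in `M` and outside `M`, with the first and last 2-cycle in `M` (so its length is odd). -/
def IsAltChain {n : ℕ} (M : Finset (Sym2 (Fin n))) (c : List (Fin n)) : Prop :=
  Odd (chainEdges c).length ∧
  ∀ k (h : k < (chainEdges c).length), ((chainEdges c).get ⟨k, h⟩ ∈ M ↔ Even k)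

/-- The digraph of a square matrix: edge `(i,j)` iff `A i j ≠ 0`. -/
def DA {n : ℕ} (A : Matrix (Fin n) (Fin n) ℝ) : Fin n → Fin n → Prop :=
  fun i j => A i j ≠ 0

/-- The cycle product `a_{ij} a_{ji}` of a 2-cycle. -/
def cycProd {n : ℕ} (A : Matrix (Fin n) (Fin n) ℝ) (e : Sym2 (Fin n)) : ℝ :=
  Sym2.lift ⟨fun i j => A i j * A j i, fun i j => mul_comm _ _⟩ e

/-- The matching product η(M) of a matching `M`. -/
noncomputable def matchProd {n : ℕ} (A : Matrix (Fin n) (Fin n) ℝ)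
    (M : Finset (Sym2 (Fin n))) : ℝ :=
  ∏ e ∈ M, cycProd A e

/-- The (finite) collection of all maximum matchings of `D(A)`. -/
noncomputable def maxMatchings {n : ℕ} (A : Matrix (Fin n) (Fin n) ℝ) :
    Finset (Finset (Sym2 (Fin n))) :=
  {M | IsMaxMatching (DA A) M}.toFinite.toFinset

/-- Δ_A: the sum of the matching products over all maximum matchings of `D(A)`. -/
noncomputable def Delta {n : ℕ} (A : Matrix (Fin n) (Fin n) ℝ) : ℝ :=
  ∑ M ∈ maxMatchings A, matchProd A M

/-- 𝕄(i,j): maximum matchings with respect to which some cycle chain from `i` to `j`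
is an alternating cycle chain. -/
def MMset {n : ℕ} (A : Matrix (Fin n) (Fin n) ℝ) (i j : Fin n) :
    Set (Finset (Sym2 (Fin n))) :=
  {M | IsMaxMatching (DA A) M ∧ ∃ c, IsCycleChainBtw (DA A) i j c ∧ IsAltChain M c}

/-- `i` and `j` are maximally matchable: 𝕄(i,j) ≠ ∅. -/
def MaxMatchable {n : ℕ} (A : Matrix (Fin n) (Fin n) ℝ) (i j : Fin n) : Prop :=
  (MMset A i j).Nonempty

open scoped Classical in
/-- The (unique) alternating cycle chain from `i` to `j`, when it exists. -/
noncomputable def theChain {n : ℕ} (A : Matrix (Fin n) (Fin n) ℝ) (i j : Fin n) :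
    List (Fin n) :=
  if h : ∃ c, IsCycleChainBtw (DA A) i j c ∧ ∃ M ∈ MMset A i j, IsAltChain M c
  then h.choose else []

/-- The path product along a cycle chain: `a_{i₁ i₂} a_{i₂ i₃} ⋯ a_{i_m i_{m+1}}`. -/
def pathProd {n : ℕ} (A : Matrix (Fin n) (Fin n) ℝ) (c : List (Fin n)) : ℝ :=
  (List.zipWith (fun a b => A a b) c c.tail).prod

open scoped Classical in
/-- β_{ij} = (−1)^{(m−1)/2} P_m(i,j) for maximally matchable `i, j`, and `0` otherwise. -/
noncomputable def beta {n : ℕ} (A : Matrix (Fin n) (Fin n) ℝ) (i j : Fin n) : ℝ :=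
  if MaxMatchable A i j then
    (-1 : ℝ) ^ (((theChain A i j).length - 2) / 2) * pathProd A (theChain A i j)
  else 0

/-- β̄_{i,j}(M): product of the cycle products of the 2-cycles of `M` not contained in
the alternating cycle chain from `i` to `j`. -/
noncomputable def betaBar {n : ℕ} (A : Matrix (Fin n) (Fin n) ℝ) (i j : Fin n)
    (M : Finset (Sym2 (Fin n))) : ℝ :=
  ∏ e ∈ M.filter (fun e => e ∉ chainEdges (theChain A i j)), cycProd A e

/-- μ_{ij} = β_{ij} · Σ_{M ∈ 𝕄(i,j)} β̄_{i,j}(M). -/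
noncomputable def mu {n : ℕ} (A : Matrix (Fin n) (Fin n) ℝ) (i j : Fin n) : ℝ :=
  beta A i j * ∑ M ∈ (MMset A i j).toFinite.toFinset, betaBar A i j M

/-- `X` is a group inverse of `A`. -/
def IsGroupInverse {n : ℕ} (A X : Matrix (Fin n) (Fin n) ℝ) : Prop :=
  A * X * A = A ∧ X * A * X = X ∧ A * X = X * A

/-- A tree digraph: strongly connected and all of its cycles have length 2. -/
def IsTreeDigraph {n : ℕ} (G : Fin n → Fin n → Prop) : Prop :=
  StronglyConnected G ∧
  ∀ (a : Fin n) (l : List (Fin n)), (a :: l).Nodup → List.Chain G a l →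
    G ((a :: l).getLast (List.cons_ne_nil a l)) a → (a :: l).length = 2

/-- A star tree digraph: a tree digraph with a center adjacent to every other vertex,
every other vertex being adjacent only to the center. -/
def IsStarTree {n : ℕ} (G : Fin n → Fin n → Prop) : Prop :=
  IsTreeDigraph G ∧
  ∃ c : Fin n, (∀ j, j ≠ c → Adjd G c j) ∧ ∀ i j, Adjd G i j → i = c ∨ j = c

/-- A corona digraph: a simple symmetric digraph in which each non-pendant vertex is
adjacent to exactly one pendant vertex. -/
def IsCorona {n : ℕ} (G : Fin n → Fin n → Prop) : Prop :=
  IsSSD G ∧ ∀ i, ¬ Pendant G i → ∃! j, Adjd G i j ∧ Pendant G j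

/-- 𝕄(i): the maximum matchings in which vertex `i` is matched. -/
noncomputable def MMi {n : ℕ} (A : Matrix (Fin n) (Fin n) ℝ) (i : Fin n) :
    Finset (Finset (Sym2 (Fin n))) :=
  {M | IsMaxMatching (DA A) M ∧ ∃ e ∈ M, i ∈ e}.toFinite.toFinset

namespace Cor32

variable {n : ℕ}

lemma adjd_symm {G : Fin n → Fin n → Prop} {a b : Fin n} (h : Adjd G a b) : Adjd G b a :=
  ⟨h.1.symm, h.2.2, h.2.1⟩

open Classical in
/-- the unique neighbour (support) of a pendant vertex -/
noncomputable def sp (A : Matrix (Fin n) (Fin n) ℝ) (k : Fin n) : Fin n :=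
  if h : Pendant (DA A) k then h.choose else k

lemma sp_adj {A : Matrix (Fin n) (Fin n) ℝ} {k : Fin n} (h : Pendant (DA A) k) :
    Adjd (DA A) k (sp A k) := by
  classical rw [sp, dif_pos h]; exact h.choose_spec.1

lemma sp_unique {A : Matrix (Fin n) (Fin n) ℝ} {k l : Fin n} (h : Pendant (DA A) k)
    (hl : Adjd (DA A) k l) : l = sp A k := by
  classical rw [sp, dif_pos h]; exact h.choose_spec.2 l hl

section Basic

variable {A : Matrix (Fin n) (Fin n) ℝ} (hD : InClassD (DA A))

include hD

lemma hdiag : ∀ k, A k k = 0 := fun k => by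
  have := hD.1.1 k; by_contra h; exact this h

lemma hsym : ∀ k l, A k l ≠ 0 → A l k ≠ 0 := fun k l h => hD.1.2 k l h

/-- row support of a pendant vertex -/
lemma entry_pend_row {p k : Fin n} (hp : Pendant (DA A) p) (hk : A p k ≠ 0) : k = sp A p := by
  have hne : p ≠ k := by rintro rfl; exact hk (hdiag hD p)
  exact sp_unique hp ⟨hne, hk, hsym hD _ _ hk⟩

lemma entry_pend_col {p k : Fin n} (hp : Pendant (DA A) p) (hk : A k p ≠ 0) : k = sp A p :=
  entry_pend_row hD hp (hsym hD _ _ hk)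

omit hD in
lemma sp_entry_ne {p : Fin n} (hp : Pendant (DA A) p) :
    A p (sp A p) ≠ 0 ∧ A (sp A p) p ≠ 0 :=
  ⟨(sp_adj hp).2.1, (sp_adj hp).2.2⟩

/-- every non-pendant vertex has a pendant neighbour, of which it is the support -/
lemma exists_pendant_nbr {u : Fin n} (hu : ¬ Pendant (DA A) u) :
    ∃ p, Pendant (DA A) p ∧ sp A p = u ∧ A u p ≠ 0 ∧ A p u ≠ 0 := by
  obtain ⟨p, hadj, hp⟩ := hD.2 u hu
  exact ⟨p, hp, (sp_unique hp (adjd_symm hadj)).symm, hadj.2.1, hadj.2.2⟩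

omit hD in
/-- an edge containing a pendant vertex joins it with its support -/
lemma edge_of_pendant {p : Fin n} {f : Sym2 (Fin n)} (hf : IsEdge (DA A) f)
    (hp : Pendant (DA A) p) (hpf : p ∈ f) : f = s(p, sp A p) := by
  obtain ⟨x, y, rfl, hadj⟩ := hf
  rcases Sym2.mem_iff.mp hpf with rfl | rfl
  · rw [← sp_unique hp hadj]
  · rw [← sp_unique hp (adjd_symm hadj), Sym2.eq_swap]

/-- for `n ≥ 3` and strongly connected digraph, the support of a pendant vertex
is not pendant -/
lemma not_pendant_sp (hSC : StronglyConnected (DA A)) (h3 : 3 ≤ n) {p : Fin n}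
    (hp : Pendant (DA A) p) : ¬ Pendant (DA A) (sp A p) := by
  intro hq
  have hqp : sp A (sp A p) = p := (sp_unique hq (adjd_symm (sp_adj hp))).symm
  have hne : p ≠ sp A p := (sp_adj hp).1
  have hex : ∃ k : Fin n, k ≠ p ∧ k ≠ sp A p := by
    by_contra h
    push_neg at h
    have hsub : (Finset.univ : Finset (Fin n)) ⊆ {p, sp A p} := by
      intro k _
      rcases Classical.em (k = p) with h2 | h2
      · simp [h2]
      · simp [h k h2]
    have := Finset.card_le_card hsub
    simp only [Finset.card_univ, Fintype.card_fin] at this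
    have h2 : ({p, sp A p} : Finset (Fin n)).card ≤ 2 := by
      apply le_trans (Finset.card_insert_le _ _); simp
    omega
  obtain ⟨k, hk1, hk2⟩ := hex
  have key : ∀ x, Relation.ReflTransGen (DA A) p x → x = p ∨ x = sp A p := by
    intro x hx
    induction hx with
    | refl => exact Or.inl rfl
    | tail hab hstep ih =>
      rcases ih with rfl | rfl
      · exact Or.inr (entry_pend_row hD hp hstep)
      · left
        have := entry_pend_row hD hq hstep
        rw [this, hqp]
  rcases key k (hSC p k) with rfl | rfl
  · exact hk1 rfl
  · exact hk2 rfl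

end Basic

end Cor32
namespace Cor32

variable {n : ℕ}

open Finset

open Classical in
/-- `S A v` : sum of the cycle products of the pendant 2-cycles at `v` -/
noncomputable def S (A : Matrix (Fin n) (Fin n) ℝ) (v : Fin n) : ℝ :=
  ∑ k, if Pendant (DA A) k ∧ sp A k = v then A v k * A k v else 0

open Classical in
/-- explicit preimage under `A` of a suitable vector `b` -/
noncomputable def solv (A : Matrix (Fin n) (Fin n) ℝ) (b lam : Fin n → ℝ) : Fin n → ℝ :=
  fun k => if Pendant (DA A) k
    then A k (sp A k) *
      (b (sp A k) - ∑ w, if ¬ Pendant (DA A) w then A (sp A k) w * lam w else 0)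
        / S A (sp A k)
    else lam k

open Classical in
/-- the candidate for the column of `X` at a non-pendant vertex `u` -/
noncomputable def wst (A : Matrix (Fin n) (Fin n) ℝ) (u : Fin n) : Fin n → ℝ :=
  fun k => if Pendant (DA A) k ∧ sp A k = u then A k u / S A u else 0

open Classical in
lemma solv_apply_pend {A : Matrix (Fin n) (Fin n) ℝ} {b lam : Fin n → ℝ} {k : Fin n}
    (hk : Pendant (DA A) k) :
    solv A b lam k = A k (sp A k) *
      (b (sp A k) - ∑ w, if ¬ Pendant (DA A) w then A (sp A k) w * lam w else 0)
        / S A (sp A k) := by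
  rw [solv, if_pos hk]

lemma solv_apply_nonpend {A : Matrix (Fin n) (Fin n) ℝ} {b lam : Fin n → ℝ} {k : Fin n}
    (hk : ¬ Pendant (DA A) k) : solv A b lam k = lam k := by
  rw [solv, if_neg hk]

lemma wst_apply_pos {A : Matrix (Fin n) (Fin n) ℝ} {u k : Fin n}
    (h1 : Pendant (DA A) k) (h2 : sp A k = u) : wst A u k = A k u / S A u := by
  rw [wst, if_pos ⟨h1, h2⟩]

lemma wst_apply_neg {A : Matrix (Fin n) (Fin n) ℝ} {u k : Fin n}
    (h : ¬ (Pendant (DA A) k ∧ sp A k = u)) : wst A u k = 0 := by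
  rw [wst, if_neg h]

section LinAlg

variable {A : Matrix (Fin n) (Fin n) ℝ} (hD : InClassD (DA A))
  (hpn : ∀ p, Pendant (DA A) p → ¬ Pendant (DA A) (sp A p))
  (hS : ∀ v, ¬ Pendant (DA A) v → S A v ≠ 0)

include hD hpn hS in
lemma mulVec_solv (b lam : Fin n → ℝ)
    (hb : ∀ p, Pendant (DA A) p → b p = lam (sp A p) * A p (sp A p)) :
    A.mulVec (solv A b lam) = b := by
  classical
  funext v
  rw [Matrix.mulVec, dotProduct]
  by_cases hv : Pendant (DA A) v
  · -- pendant row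
    have key : ∀ k, A v k * solv A b lam k
        = if k = sp A v then A v (sp A v) * lam (sp A v) else 0 := by
      intro k
      by_cases hk : k = sp A v
      · subst hk
        rw [if_pos rfl, solv, if_neg (hpn v hv)]
      · rw [if_neg hk]
        have : A v k = 0 := by
          by_contra h
          exact hk (entry_pend_row hD hv h)
        rw [this, zero_mul]
    rw [Finset.sum_congr rfl (fun k _ => key k), Finset.sum_ite_eq' Finset.univ (sp A v)]
    rw [if_pos (Finset.mem_univ _), hb v hv, mul_comm]
  · -- non-pendant row
    set W : ℝ := ∑ w, if ¬ Pendant (DA A) w then A v w * lam w else 0 with hW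
    have key : ∀ k, A v k * solv A b lam k
        = (if Pendant (DA A) k ∧ sp A k = v then A v k * A k v else 0) * ((b v - W) / S A v)
          + (if ¬ Pendant (DA A) k then A v k * lam k else 0) := by
      intro k
      by_cases hk : Pendant (DA A) k
      · rw [show (if ¬ Pendant (DA A) k then A v k * lam k else 0) = 0
          from if_neg (not_not_intro hk), add_zero, solv, if_pos hk]
        by_cases hkv : sp A k = v
        · rw [if_pos ⟨hk, hkv⟩, hkv, ← hW]; ring
        · have : A v k = 0 := by
            by_contra h
            exact hkv (entry_pend_col hD hk h).symm
          rw [this, if_neg (by tauto), zero_mul, zero_mul]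
      · rw [solv, if_neg hk, if_pos hk, if_neg (by tauto), zero_mul, zero_add]
    rw [Finset.sum_congr rfl (fun k _ => key k), Finset.sum_add_distrib, ← Finset.sum_mul]
    have h1 : (∑ k, if Pendant (DA A) k ∧ sp A k = v then A v k * A k v else 0) = S A v := rfl
    rw [h1, ← hW, mul_comm (S A v), div_mul_cancel₀ _ (hS v hv)]
    ring

include hD hpn hS in
lemma mulVec_wst {u : Fin n} (hu : ¬ Pendant (DA A) u) :
    A.mulVec (wst A u) = Pi.single u 1 := by
  classical
  funext v
  rw [Matrix.mulVec, dotProduct]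
  by_cases hv : Pendant (DA A) v
  · -- pendant row : all terms vanish
    have key : ∀ k, A v k * wst A u k = 0 := by
      intro k
      by_cases hk : Pendant (DA A) k
      · have : A v k = 0 := by
          by_contra h
          have := entry_pend_row hD hv h
          exact hpn v hv (this ▸ hk)
        rw [this, zero_mul]
      · rw [wst, if_neg (by tauto), mul_zero]
    rw [Finset.sum_congr rfl (fun k _ => key k), Finset.sum_const_zero]
    have : v ≠ u := fun h => hu (h ▸ hv)
    rw [Pi.single_eq_of_ne this]
  · by_cases hvu : v = u
    · subst hvu
      have key : ∀ k, A v k * wst A v k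
          = (if Pendant (DA A) k ∧ sp A k = v then A v k * A k v else 0) / S A v := by
        intro k
        by_cases hk : Pendant (DA A) k ∧ sp A k = v
        · rw [wst, if_pos hk, if_pos hk]; ring
        · rw [wst, if_neg hk, if_neg hk, mul_zero, zero_div]
      rw [Finset.sum_congr rfl (fun k _ => key k), ← Finset.sum_div]
      have h1 : (∑ k, if Pendant (DA A) k ∧ sp A k = v then A v k * A k v else 0) = S A v := rfl
      rw [h1, div_self (hS v hv), Pi.single_eq_same]
    · have key : ∀ k, A v k * wst A u k = 0 := by
        intro k
        by_cases hk : Pendant (DA A) k ∧ sp A k = u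
        · have : A v k = 0 := by
            by_contra h
            exact hvu ((entry_pend_col hD hk.1 h).trans hk.2)
          rw [this, zero_mul]
        · rw [wst, if_neg hk, mul_zero]
      rw [Finset.sum_congr rfl (fun k _ => key k), Finset.sum_const_zero,
        Pi.single_eq_of_ne hvu]

include hD hpn hS in
/-- `wst A u` is in the range of `A` -/
lemma wst_mem_range {u : Fin n} (hu : ¬ Pendant (DA A) u) :
    ∃ y, A.mulVec y = wst A u := by
  classical
  refine ⟨solv A (wst A u) (fun w => if w = u then 1 / S A u else 0),
    mulVec_solv hD hpn hS _ _ ?_⟩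
  intro p hp
  rw [wst]
  by_cases h : sp A p = u
  · rw [if_pos ⟨hp, h⟩, h, if_pos rfl]; ring
  · rw [if_neg (by tauto), if_neg h, zero_mul]

end LinAlg

end Cor32
namespace Cor32

variable {n : ℕ}

section GI

variable {A X : Matrix (Fin n) (Fin n) ℝ} (hX : IsGroupInverse A X)

include hX in
/-- null space meets range trivially when a group inverse exists -/
lemma null_range {d : Fin n → ℝ} (hd0 : A.mulVec d = 0) (y : Fin n → ℝ)
    (hdy : A.mulVec y = d) : d = 0 := by
  have h1 : d = (A * X).mulVec d :=
    calc d = A *ᵥ y := hdy.symm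
    _ = (A * X * A) *ᵥ y := by rw [hX.1]
    _ = (A * X) *ᵥ (A *ᵥ y) := (Matrix.mulVec_mulVec y (A * X) A).symm
    _ = (A * X) *ᵥ d := by rw [hdy]
  rw [h1, hX.2.2, ← Matrix.mulVec_mulVec, hd0, Matrix.mulVec_zero]

include hX in
lemma col_determined {w₁ w₂ : Fin n → ℝ} (h : A.mulVec w₁ = A.mulVec w₂)
    (y₁ : Fin n → ℝ) (hy₁ : A.mulVec y₁ = w₁) (y₂ : Fin n → ℝ) (hy₂ : A.mulVec y₂ = w₂) :
    w₁ = w₂ := by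
  have hd0 : A.mulVec (w₁ - w₂) = 0 := by
    rw [Matrix.mulVec_sub, h, sub_self]
  have hdy : A.mulVec (y₁ - y₂) = w₁ - w₂ := by
    rw [Matrix.mulVec_sub, hy₁, hy₂]
  have := null_range hX hd0 _ hdy
  linear_combination (norm := module) this

include hX in
lemma X_eq_A_mul_sq : X = A * (X * X) := by
  rw [← Matrix.mul_assoc, hX.2.2, hX.2.1]

variable (hD : InClassD (DA A))

include hD in
/-- column of `A` at a pendant vertex -/
lemma colA_pendant {p : Fin n} (hp : Pendant (DA A) p) :
    A.mulVec (Pi.single p 1) = A (sp A p) p • (Pi.single (sp A p) 1 : Fin n → ℝ) := by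
  funext k
  rw [Matrix.mulVec_single]
  by_cases hk : k = sp A p
  · subst hk; simp
  · have : A k p = 0 := by
      by_contra h
      exact hk (entry_pend_col hD hp h)
    simp [this, Pi.single_eq_of_ne hk]

include hX hD in
/-- `(A*X)` fixes `e_u` for every non-pendant `u` -/
lemma AX_fixes {u : Fin n} (hu : ¬ Pendant (DA A) u) :
    (A * X).mulVec (Pi.single u 1) = Pi.single u 1 := by
  obtain ⟨p, hp, hsp, hup, hpu⟩ := exists_pendant_nbr hD hu
  have h1 : (A * X * A) *ᵥ (Pi.single p 1) = A *ᵥ (Pi.single p 1) := by rw [hX.1]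
  rw [← Matrix.mulVec_mulVec, colA_pendant hD hp, hsp, Matrix.mulVec_smul] at h1
  have hAup : A u p ≠ 0 := hup
  exact smul_right_injective (Fin n → ℝ) hAup h1

variable (hpn : ∀ p, Pendant (DA A) p → ¬ Pendant (DA A) (sp A p))
  (hS : ∀ v, ¬ Pendant (DA A) v → S A v ≠ 0)

include hX hD hpn hS in
/-- the column of the group inverse at a non-pendant vertex -/
lemma Xcol_support {u : Fin n} (hu : ¬ Pendant (DA A) u) :
    X.mulVec (Pi.single u 1) = wst A u := by
  obtain ⟨y₂, hy₂⟩ := wst_mem_range hD hpn hS hu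
  refine col_determined hX ?_ ((X * X).mulVec (Pi.single u 1)) ?_ y₂ hy₂
  · rw [Matrix.mulVec_mulVec, AX_fixes hX hD hu, mulVec_wst hD hpn hS hu]
  · rw [Matrix.mulVec_mulVec, ← X_eq_A_mul_sq hX]

include hX hD hpn hS in
/-- the column of the group inverse at a pendant vertex -/
lemma Xcol_pendant {j : Fin n} (hj : Pendant (DA A) j) :
    X.mulVec (Pi.single j 1)
      = A (sp A j) j • solv A (wst A (sp A j))
          (fun w => if w = sp A j then 1 / S A (sp A j) else 0) := by
  classical
  set v := sp A j with hv
  have hvnp : ¬ Pendant (DA A) v := hpn j hj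
  set lamv : Fin n → ℝ := fun w => if w = v then 1 / S A v else 0 with hlamv
  have hlamv_v : lamv v = 1 / S A v := by rw [hlamv]; simp
  have hlamv_ne : ∀ w, w ≠ v → lamv w = 0 := by intro w hw; rw [hlamv]; simp [hw]
  have hsolv : A.mulVec (solv A (wst A v) lamv) = wst A v := by
    apply mulVec_solv hD hpn hS
    intro p hp
    rw [wst]
    by_cases h : sp A p = v
    · rw [if_pos ⟨hp, h⟩, h, hlamv_v]; ring
    · rw [if_neg (by tauto), hlamv_ne _ h, zero_mul]
  obtain ⟨y₂, hy₂⟩ := wst_mem_range hD hpn hS hvnp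
  have hz_range : ∃ y, A.mulVec y = solv A (wst A v) lamv := by
    refine ⟨solv A (solv A (wst A v) lamv) (fun w => -(A w v / S A v) / S A w),
      mulVec_solv hD hpn hS _ _ ?_⟩
    intro p hp
    rw [solv, if_pos hp]
    have h0 : wst A v (sp A p) = 0 := by
      rw [wst, if_neg (by rintro ⟨h, -⟩; exact hpn p hp h)]
    have hWsum : (∑ w, if ¬ Pendant (DA A) w then A (sp A p) w * lamv w else 0)
        = A (sp A p) v / S A v := by
      have : ∀ w, (if ¬ Pendant (DA A) w then A (sp A p) w * lamv w else 0)
          = if w = v then A (sp A p) v / S A v else 0 := by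
        intro w
        by_cases hw : w = v
        · subst hw; rw [if_pos hvnp, if_pos rfl, hlamv_v]; ring
        · rw [if_neg hw, hlamv_ne _ hw, mul_zero, ite_self]
      rw [Finset.sum_congr rfl (fun w _ => this w), Finset.sum_ite_eq' Finset.univ v,
        if_pos (Finset.mem_univ _)]
    rw [h0, hWsum]
    ring
  obtain ⟨y₃, hy₃⟩ := hz_range
  refine col_determined hX ?_ ((X * X).mulVec (Pi.single j 1)) ?_
    (A v j • y₃) (by rw [Matrix.mulVec_smul, hy₃])
  · rw [Matrix.mulVec_smul, hsolv, Matrix.mulVec_mulVec]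
    have h1 : (A * X).mulVec (Pi.single j 1) = (X * A).mulVec (Pi.single j 1) := by
      rw [hX.2.2]
    rw [h1, ← Matrix.mulVec_mulVec, colA_pendant hD hj, ← hv, Matrix.mulVec_smul,
      Xcol_support hX hD hpn hS hvnp]

  · rw [Matrix.mulVec_mulVec, ← X_eq_A_mul_sq hX]

end GI

end Cor32
namespace Cor32

variable {n : ℕ}

lemma adjd_of_edge {A : Matrix (Fin n) (Fin n) ℝ} {a b : Fin n}
    (h : IsEdge (DA A) s(a, b)) : Adjd (DA A) a b := by
  obtain ⟨x, y, hxy, hadj⟩ := h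
  rcases Sym2.eq_iff.mp hxy with ⟨rfl, rfl⟩ | ⟨rfl, rfl⟩
  · exact hadj
  · exact adjd_symm hadj

section Comb

variable {A : Matrix (Fin n) (Fin n) ℝ} (hD : InClassD (DA A))

include hD in
/-- every 2-cycle of a maximum matching contains a pendant vertex -/
lemma L1 {M : Finset (Sym2 (Fin n))} (hM : IsMaxMatching (DA A) M) {a b : Fin n}
    (hab : s(a, b) ∈ M) : Pendant (DA A) a ∨ Pendant (DA A) b := by
  classical
  by_contra h
  push_neg at h
  obtain ⟨ha, hb⟩ := h
  have hadj : Adjd (DA A) a b := adjd_of_edge (hM.1.1 _ hab)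
  obtain ⟨p, hp, hspa, hap, hpa⟩ := exists_pendant_nbr hD ha
  obtain ⟨q, hq, hspb, hbq, hqb⟩ := exists_pendant_nbr hD hb
  have hpq : p ≠ q := fun h => hadj.1 (by rw [← hspa, h, hspb])
  have hpa' : p ≠ a := fun h => ha (h ▸ hp)
  have hpb' : p ≠ b := fun h => hb (h ▸ hp)
  have hqa' : q ≠ a := fun h => ha (h ▸ hq)
  have hqb' : q ≠ b := fun h => hb (h ▸ hq)
  have hpunc : ∀ f ∈ M, p ∉ f := by
    intro f hf hpf
    have hfeq : f = s(p, a) := by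
      have := edge_of_pendant (hM.1.1 f hf) hp hpf
      rwa [hspa] at this
    have hfne : f ≠ s(a, b) := by
      rw [hfeq]
      intro h
      rcases Sym2.eq_iff.mp h with ⟨h1, -⟩ | ⟨h1, -⟩
      · exact hpa' h1
      · exact hpb' h1
    exact hM.1.2 f hf s(a, b) hab hfne a (by rw [hfeq]; simp) (by simp)
  have hqunc : ∀ f ∈ M, q ∉ f := by
    intro f hf hqf
    have hfeq : f = s(q, b) := by
      have := edge_of_pendant (hM.1.1 f hf) hq hqf
      rwa [hspb] at this
    have hfne : f ≠ s(a, b) := by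
      rw [hfeq]
      intro h
      rcases Sym2.eq_iff.mp h with ⟨h1, -⟩ | ⟨h1, -⟩
      · exact hqa' h1
      · exact hqb' h1
    exact hM.1.2 f hf s(a, b) hab hfne b (by rw [hfeq]; simp) (by simp)
  have herase : ∀ f ∈ M.erase s(a, b), a ∉ f ∧ b ∉ f ∧ p ∉ f ∧ q ∉ f := by
    intro f hf
    obtain ⟨hfne, hfM⟩ := Finset.mem_erase.mp hf
    refine ⟨?_, ?_, hpunc f hfM, hqunc f hfM⟩
    · exact hM.1.2 s(a, b) hab f hfM hfne.symm a (by simp)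
    · exact hM.1.2 s(a, b) hab f hfM hfne.symm b (by simp)
  have hadj_ap : Adjd (DA A) a p := adjd_symm (hspa ▸ sp_adj hp)
  have hadj_bq : Adjd (DA A) b q := adjd_symm (hspb ▸ sp_adj hq)
  have hE12 : s(a, p) ≠ s(b, q) := by
    intro h
    rcases Sym2.eq_iff.mp h with ⟨h1, -⟩ | ⟨h1, -⟩
    · exact hadj.1 h1
    · exact hqa' h1.symm
  have hE2nm : s(b, q) ∉ M.erase s(a, b) := fun h => (herase _ h).2.1 (by simp)
  have hE1nm : s(a, p) ∉ insert s(b, q) (M.erase s(a, b)) := by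
    intro h
    rcases Finset.mem_insert.mp h with h | h
    · exact hE12 h
    · exact (herase _ h).1 (by simp)
  set M' := insert s(a, p) (insert s(b, q) (M.erase s(a, b))) with hM'
  have hmatch : IsMatching (DA A) M' := by
    constructor
    · intro e he
      rcases Finset.mem_insert.mp he with rfl | he
      · exact ⟨a, p, rfl, hadj_ap⟩
      rcases Finset.mem_insert.mp he with rfl | he
      · exact ⟨b, q, rfl, hadj_bq⟩
      · exact hM.1.1 e (Finset.mem_of_mem_erase he)
    · have hap_bq : ∀ v, v ∈ s(a, p) → v ∉ s(b, q) := by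
        intro v hv hv'
        rcases Sym2.mem_iff.mp hv with rfl | rfl <;>
          rcases Sym2.mem_iff.mp hv' with h | h
        · exact hadj.1 h
        · exact hqa' h.symm
        · exact hpb' h
        · exact hpq h
      have hap_er : ∀ v, v ∈ s(a, p) → ∀ f ∈ M.erase s(a, b), v ∉ f := by
        intro v hv f hf
        rcases Sym2.mem_iff.mp hv with rfl | rfl
        · exact (herase f hf).1
        · exact (herase f hf).2.2.1
      have hbq_er : ∀ v, v ∈ s(b, q) → ∀ f ∈ M.erase s(a, b), v ∉ f := by
        intro v hv f hf
        rcases Sym2.mem_iff.mp hv with rfl | rfl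
        · exact (herase f hf).2.1
        · exact (herase f hf).2.2.2
      intro e he f hf hef v hve hvf
      rcases Finset.mem_insert.mp he with rfl | he'
      · -- e = s(a,p)
        rcases Finset.mem_insert.mp hf with rfl | hf'
        · exact hef rfl
        rcases Finset.mem_insert.mp hf' with rfl | hf''
        · exact hap_bq v hve hvf
        · exact hap_er v hve f hf'' hvf
      rcases Finset.mem_insert.mp he' with rfl | he''
      · -- e = s(b,q)
        rcases Finset.mem_insert.mp hf with rfl | hf'
        · exact hap_bq v hvf hve
        rcases Finset.mem_insert.mp hf' with rfl | hf''
        · exact hef rfl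
        · exact hbq_er v hve f hf'' hvf
      · -- e ∈ erase
        rcases Finset.mem_insert.mp hf with rfl | hf'
        · exact hap_er v hvf e he'' hve
        rcases Finset.mem_insert.mp hf' with rfl | hf''
        · exact hbq_er v hvf e he'' hve
        · exact hM.1.2 e (Finset.mem_of_mem_erase he'') f (Finset.mem_of_mem_erase hf'')
            hef v hve hvf
  have hpos : 1 ≤ M.card := Finset.card_pos.mpr ⟨_, hab⟩
  have hcard : M'.card = M.card + 1 := by
    rw [hM', Finset.card_insert_of_notMem hE1nm, Finset.card_insert_of_notMem hE2nm,
      Finset.card_erase_of_mem hab]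
    omega
  have := hM.2 M' hmatch
  omega

include hD in
/-- in every maximum matching, a non-pendant vertex is matched with a pendant vertex -/
lemma partner {M : Finset (Sym2 (Fin n))} (hM : IsMaxMatching (DA A) M) {u : Fin n}
    (hu : ¬ Pendant (DA A) u) :
    ∃ p, Pendant (DA A) p ∧ sp A p = u ∧ s(u, p) ∈ M := by
  classical
  obtain ⟨p₀, hp₀, hsp₀, hup₀, hp₀u⟩ := exists_pendant_nbr hD hu
  have hcov : ∃ e ∈ M, u ∈ e := by
    by_contra hunc
    push_neg at hunc
    have hnm : s(u, p₀) ∉ M := fun h => hunc _ h (by simp)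
    have hmatch : IsMatching (DA A) (insert s(u, p₀) M) := by
      constructor
      · intro e he
        rcases Finset.mem_insert.mp he with rfl | he
        · exact ⟨u, p₀, rfl, adjd_symm (hsp₀ ▸ sp_adj hp₀)⟩
        · exact hM.1.1 e he
      · have hkey : ∀ v, v ∈ s(u, p₀) → ∀ f ∈ M, v ∉ f := by
          intro v hv f hf hvf
          rcases Sym2.mem_iff.mp hv with h | h
          · exact hunc f hf (h ▸ hvf)
          · have hfeq : f = s(p₀, u) := by
              have := edge_of_pendant (hM.1.1 f hf) hp₀ (h ▸ hvf)
              rwa [hsp₀] at this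
            exact hunc f hf (by rw [hfeq]; simp)
        intro e he f hf hef v hve hvf
        rcases Finset.mem_insert.mp he with rfl | he'
        · rcases Finset.mem_insert.mp hf with rfl | hf'
          · exact hef rfl
          · exact hkey v hve f hf' hvf
        · rcases Finset.mem_insert.mp hf with rfl | hf'
          · exact hkey v hvf e he' hve
          · exact hM.1.2 e he' f hf' hef v hve hvf
    have h1 := hM.2 _ hmatch
    rw [Finset.card_insert_of_notMem hnm] at h1
    omega
  obtain ⟨e, he, hue⟩ := hcov
  obtain ⟨x, y, rfl, hadj⟩ := hM.1.1 e he
  rcases Sym2.mem_iff.mp hue with rfl | rfl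
  · have hy : Pendant (DA A) y := (L1 hD hM he).resolve_left hu
    exact ⟨y, hy, (sp_unique hy (adjd_symm hadj)).symm, he⟩
  · have hx : Pendant (DA A) x := (L1 hD hM he).resolve_right hu
    exact ⟨x, hx, (sp_unique hx hadj).symm, by rwa [Sym2.eq_swap]⟩

omit hD in
/-- a vertex lies in at most one 2-cycle of a matching -/
lemma partner_unique {M : Finset (Sym2 (Fin n))} (hM : IsMatching (DA A) M)
    {u : Fin n} {e f : Sym2 (Fin n)} (he : e ∈ M) (hf : f ∈ M) (hue : u ∈ e)
    (huf : u ∈ f) : e = f := by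
  by_contra h
  exact hM.2 e he f hf h u hue huf

include hD in
lemma S_ne_zero (hΔ : Delta A ≠ 0) {u : Fin n} (hu : ¬ Pendant (DA A) u) :
    S A u ≠ 0 := by
  classical
  intro h0
  apply hΔ
  have hmem : ∀ M : Finset (Sym2 (Fin n)), M ∈ maxMatchings A ↔ IsMaxMatching (DA A) M := by
    intro M
    rw [maxMatchings, Set.Finite.mem_toFinset, Set.mem_setOf_eq]
  set part : Finset (Sym2 (Fin n)) → Fin n := fun M =>
    if h : ∃ p, Pendant (DA A) p ∧ sp A p = u ∧ s(u, p) ∈ M then h.choose else u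
    with hpart_def
  have hpart : ∀ M ∈ maxMatchings A,
      Pendant (DA A) (part M) ∧ sp A (part M) = u ∧ s(u, part M) ∈ M := by
    intro M hM
    have hex := partner hD ((hmem M).mp hM) hu
    have : part M = hex.choose := by rw [hpart_def]; exact dif_pos hex
    rw [this]
    exact hex.choose_spec
  set Pu : Finset (Fin n) :=
    Finset.univ.filter (fun p => Pendant (DA A) p ∧ sp A p = u) with hPu
  set Core : Finset (Finset (Sym2 (Fin n))) :=
    (maxMatchings A).image (fun M => M.filter (fun e => u ∉ e)) with hCore
  have hfilter_eq : ∀ M ∈ maxMatchings A,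
      M.filter (fun e => u ∉ e) = M.erase s(u, part M) := by
    intro M hM
    ext e
    rw [Finset.mem_filter, Finset.mem_erase]
    constructor
    · rintro ⟨heM, hne⟩
      refine ⟨?_, heM⟩
      rintro rfl
      exact hne (by simp)
    · rintro ⟨hne, heM⟩
      refine ⟨heM, fun hue => hne ?_⟩
      exact partner_unique ((hmem M).mp hM).1 heM (hpart M hM).2.2 hue (by simp)
  have hCore_nou : ∀ N ∈ Core, ∀ f ∈ N, u ∉ f := by
    intro N hN
    rw [hCore, Finset.mem_image] at hN
    obtain ⟨M, _, rfl⟩ := hN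
    intro f hf
    exact (Finset.mem_filter.mp hf).2
  -- the inverse map is well-defined
  have hins : ∀ p ∈ Pu, ∀ N ∈ Core, insert s(u, p) N ∈ maxMatchings A := by
    intro p hp N hN
    obtain ⟨hpend, hspu⟩ := Finset.mem_filter.mp hp |>.2
    obtain ⟨M₀, hM₀mem, hN₀⟩ := Finset.mem_image.mp (hCore ▸ hN)
    have hM₀ : IsMaxMatching (DA A) M₀ := (hmem M₀).mp hM₀mem
    have hNsub : N ⊆ M₀ := hN₀ ▸ Finset.filter_subset _ _
    have hNu : ∀ f ∈ N, u ∉ f := hCore_nou N hN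
    have hnm : s(u, p) ∉ N := fun h => hNu _ h (by simp)
    have hcardN : N.card + 1 = M₀.card := by
      have h1 := hfilter_eq M₀ hM₀mem
      have h2 : N.card = M₀.card - 1 := by
        rw [← hN₀, h1, Finset.card_erase_of_mem (hpart M₀ hM₀mem).2.2]
      have h3 : 1 ≤ M₀.card := Finset.card_pos.mpr ⟨_, (hpart M₀ hM₀mem).2.2⟩
      omega
    have hmatch : IsMatching (DA A) (insert s(u, p) N) := by
      constructor
      · intro e he
        rcases Finset.mem_insert.mp he with rfl | he
        · exact ⟨u, p, rfl, adjd_symm (hspu ▸ sp_adj hpend)⟩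
        · exact hM₀.1.1 e (hNsub he)
      · have hkey : ∀ v, v ∈ s(u, p) → ∀ f ∈ N, v ∉ f := by
          intro v hv f hf
          rcases Sym2.mem_iff.mp hv with rfl | rfl
          · exact hNu f hf
          · intro hvf
            have : f = s(v, u) := by
              have := edge_of_pendant (hM₀.1.1 f (hNsub hf)) hpend hvf
              rwa [hspu] at this
            exact hNu f hf (by rw [this]; simp)
        intro e he f hf hef v hve hvf
        rcases Finset.mem_insert.mp he with rfl | he'
        · rcases Finset.mem_insert.mp hf with rfl | hf'
          · exact hef rfl
          · exact hkey v hve f hf' hvf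
        · rcases Finset.mem_insert.mp hf with rfl | hf'
          · exact hkey v hvf e he' hve
          · exact hM₀.1.2 e (hNsub he') f (hNsub hf') hef v hve hvf
    rw [hmem]
    refine ⟨hmatch, fun M'' hM'' => ?_⟩
    rw [Finset.card_insert_of_notMem hnm, hcardN]
    exact hM₀.2 M'' hM''
  have hval : ∀ M ∈ maxMatchings A,
      matchProd A M = (A u (part M) * A (part M) u) *
        matchProd A (M.filter (fun e => u ∉ e)) := by
    intro M hM
    rw [hfilter_eq M hM, matchProd, matchProd,
      ← Finset.mul_prod_erase M _ (hpart M hM).2.2]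
    simp only [cycProd, Sym2.lift_mk]
  have hDelta : Delta A
      = ∑ pN ∈ Pu ×ˢ Core, (A u pN.1 * A pN.1 u) * matchProd A pN.2 := by
    rw [Delta]
    refine Finset.sum_nbij' (fun M => (part M, M.filter (fun e => u ∉ e)))
      (fun pN => insert s(u, pN.1) pN.2) ?_ ?_ ?_ ?_ ?_
    · intro M hM
      rw [Finset.mem_product]
      exact ⟨Finset.mem_filter.mpr ⟨Finset.mem_univ _, (hpart M hM).1, (hpart M hM).2.1⟩,
        Finset.mem_image.mpr ⟨M, hM, rfl⟩⟩
    · intro pN hpN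
      rw [Finset.mem_product] at hpN
      exact hins pN.1 hpN.1 pN.2 hpN.2
    · intro M hM
      show insert s(u, part M) (Finset.filter (fun e => u ∉ e) M) = M
      rw [hfilter_eq M hM]
      exact Finset.insert_erase (hpart M hM).2.2
    · intro pN hpN
      rw [Finset.mem_product] at hpN
      obtain ⟨hp, hN⟩ := hpN
      have hM' := hins pN.1 hp pN.2 hN
      have hpend : Pendant (DA A) pN.1 := (Finset.mem_filter.mp hp).2.1
      have hNu : ∀ f ∈ pN.2, u ∉ f := hCore_nou pN.2 hN
      have hpart' : part (insert s(u, pN.1) pN.2) = pN.1 := by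
        have hspec := hpart _ hM'
        have hedge : s(u, part (insert s(u, pN.1) pN.2)) = s(u, pN.1) := by
          exact partner_unique (u := u) ((hmem _).mp hM').1 hspec.2.2
            (Finset.mem_insert_self _ _) (by simp) (by simp)
        rcases Sym2.eq_iff.mp hedge with ⟨-, h⟩ | ⟨h1, -⟩
        · exact h
        · exact absurd (h1 ▸ hpend) hu
      have hfilt : (insert s(u, pN.1) pN.2).filter (fun e => u ∉ e) = pN.2 := by
        ext e
        rw [Finset.mem_filter, Finset.mem_insert]
        constructor
        · rintro ⟨rfl | he, hue⟩
          · exact absurd (by simp) hue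
          · exact he
        · intro he
          exact ⟨Or.inr he, hNu e he⟩
      show (part (insert s(u, pN.1) pN.2),
        Finset.filter (fun e => u ∉ e) (insert s(u, pN.1) pN.2)) = pN
      rw [hpart', hfilt]
    · intro M hM
      exact hval M hM
  have hSu : (∑ p ∈ Pu, A u p * A p u) = S A u := by
    rw [S, hPu, Finset.sum_filter]
  rw [hDelta, Finset.sum_product]
  have hsw : ∀ x ∈ Pu, (∑ y ∈ Core, A u x * A x u * matchProd A y)
      = (A u x * A x u) * ∑ y ∈ Core, matchProd A y := by
    intro x _
    rw [Finset.mul_sum]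
  rw [Finset.sum_congr rfl hsw, ← Finset.sum_mul, hSu, h0, zero_mul]


end Comb

end Cor32

set_option maxHeartbeats 1600000

open Cor32

/-- Corollary 3.2: if `i, j` are maximally matchable in `D(A)`, then `α_{ij} ≠ 0`. -/
theorem group_inverse_entry_ne_zero_of_maxMatchable {n : ℕ} (A : Matrix (Fin n) (Fin n) ℝ)
    (hD : InClassD (DA A)) (hSC : StronglyConnected (DA A)) (hΔ : Delta A ≠ 0)
    (i j : Fin n) (hm : MaxMatchable A i j) :
    ∀ X, IsGroupInverse A X → X i j ≠ 0 := by
  classical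
  intro X hX
  obtain ⟨M, hMmem⟩ := hm
  obtain ⟨hMmax, L, hbtw, halt⟩ := hMmem
  obtain ⟨⟨hnd, hlen2, hch⟩, hhead, hlast⟩ := hbtw
  have hcne : L ≠ [] := by
    intro h
    rw [h] at hlen2
    simp at hlen2
  -- list infrastructure
  have hlenE : (chainEdges L).length = L.length - 1 := by
    rw [chainEdges, List.length_zipWith, List.length_tail]
    omega
  have hodd : Odd (L.length - 1) := hlenE ▸ halt.1
  have hmemE : ∀ (k : ℕ) (hk : k + 1 < L.length),
      (s(L[k]'(by omega), L[k+1]'hk) ∈ M ↔ Even k) := by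
    intro k hk
    have hk' : k < (chainEdges L).length := by omega
    have h2 := halt.2 k hk'
    rw [List.get_eq_getElem] at h2
    simp only [chainEdges, List.getElem_zipWith, List.getElem_tail] at h2
    exact h2
  have hAdj : ∀ (k : ℕ) (hk : k + 1 < L.length),
      Adjd (DA A) (L[k]'(by omega)) (L[k+1]'hk) := by
    intro k hk
    have := List.isChain_iff_getElem.mp hch k (by omega)
    simpa [List.get_eq_getElem] using this
  have hNd : ∀ (k l : ℕ) (hk : k < L.length) (hl : l < L.length), k ≠ l →
      L[k]'hk ≠ L[l]'hl := by
    intro k l hk hl hne h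
    exact hne ((List.Nodup.getElem_inj_iff hnd).mp h)
  have hi0 : L[0]'(by omega) = i := by
    rw [List.head?_eq_head hcne, Option.some.injEq] at hhead
    rw [← hhead, List.head_eq_getElem_zero]
  have hj0 : L[L.length - 1]'(by omega) = j := by
    rw [List.getLast?_eq_getLast hcne, Option.some.injEq] at hlast
    rw [← hlast, List.getLast_eq_getElem]
  rcases Nat.lt_or_ge n 3 with hn | h3
  · -- small case : necessarily n = 2 and the chain is [i, j]
    have hlen_le : L.length ≤ n := by
      have h1 := List.Nodup.length_le_card hnd
      simpa using h1
    have hc2 : L.length = 2 := by omega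
    have hn2 : n = 2 := by omega
    have hij : i ≠ j := by
      rw [← hi0, ← hj0]
      exact hNd 0 (L.length - 1) (by omega) (by omega) (by omega)
    have hadj : Adjd (DA A) i j := by
      rw [← hi0, ← hj0]
      have := hAdj 0 (by omega)
      convert this using 2
      omega
    have ha : A i j ≠ 0 := hadj.2.1
    have hb : A j i ≠ 0 := hadj.2.2
    have hAii : A i i = 0 := hdiag hD i
    have hAjj : A j j = 0 := hdiag hD j
    have huniv : (Finset.univ : Finset (Fin n)) = {i, j} := by
      symm
      apply Finset.eq_univ_of_card
      rw [Finset.card_pair hij, Fintype.card_fin, hn2]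
    have hAX : ∀ k, (A * X) j k = A j i * X i k := by
      intro k
      rw [Matrix.mul_apply, huniv, Finset.sum_pair hij, hAjj, zero_mul, add_zero]
    have h1 := congrFun (congrFun hX.1 j) i
    rw [Matrix.mul_apply, huniv, Finset.sum_pair hij, hAX i, hAX j, hAii] at h1
    intro hXij
    rw [hXij] at h1
    simp at h1
    exact hb h1.symm
  · -- main case : n ≥ 3
    have hpn : ∀ p, Pendant (DA A) p → ¬ Pendant (DA A) (sp A p) :=
      fun p hp => not_pendant_sp hD hSC h3 hp
    have hS0 : ∀ v, ¬ Pendant (DA A) v → S A v ≠ 0 := fun v hv => S_ne_zero hD hΔ hv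
    have hXentry : ∀ y : Fin n, X i y = X.mulVec (Pi.single y 1) i := by
      intro y
      rw [Matrix.mulVec_single]
      exact (mul_one _).symm
    obtain ⟨t, ht⟩ := hodd
    have hcase : L.length - 1 = 1 ∨ L.length - 1 = 3 ∨ 5 ≤ L.length - 1 := by omega
    rcases hcase with h1 | h3' | h5
    · -- chain [i, j]
      have hclen : L.length = 2 := by omega
      have hj1 : L[1]'(by omega) = j := by
        rw [← hj0]
        congr 1
        omega
      have hE0 : s(i, j) ∈ M := by
        rw [← hi0, ← hj1]
        exact (hmemE 0 (by omega)).mpr Even.zero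
      have hadj : Adjd (DA A) i j := by
        rw [← hi0, ← hj1]
        exact hAdj 0 (by omega)
      rcases L1 hD hMmax hE0 with hp | hp
      · -- i pendant, j its support
        have hspi : sp A i = j := (sp_unique hp hadj).symm
        have hpj : ¬ Pendant (DA A) j := by
          intro hpj
          exact hpn i hp (hspi ▸ hpj)
        have hcol := Xcol_support hX hD hpn hS0 hpj
        rw [hXentry j, hcol, wst_apply_pos hp hspi]
        exact div_ne_zero hadj.2.1 (hS0 j hpj)
      · -- j pendant, i its support
        have hspj : sp A j = i := (sp_unique hp (adjd_symm hadj)).symm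
        have hpi : ¬ Pendant (DA A) i := by
          intro hpi
          exact hpn j hp (hspj ▸ hpi)
        have hcol := Xcol_pendant hX hD hpn hS0 hp
        rw [hXentry j, hcol]
        rw [Pi.smul_apply, smul_eq_mul, solv_apply_nonpend hpi, hspj, if_pos rfl]
        exact mul_ne_zero hadj.2.1 (one_div_ne_zero (hS0 i (hspj ▸ hpi)))
    · -- chain [i, u, v, j]
      have hclen : L.length = 4 := by omega
      have hE0 : s(L[0]'(by omega), L[1]'(by omega)) ∈ M :=
        (hmemE 0 (by omega)).mpr Even.zero
      have hE2 : s(L[2]'(by omega), L[3]'(by omega)) ∈ M :=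
        (hmemE 2 (by omega)).mpr (by decide)
      have a01 : Adjd (DA A) (L[0]'(by omega)) (L[1]'(by omega)) := hAdj 0 (by omega)
      have a12 : Adjd (DA A) (L[1]'(by omega)) (L[2]'(by omega)) := hAdj 1 (by omega)
      have a23 : Adjd (DA A) (L[2]'(by omega)) (L[3]'(by omega)) := hAdj 2 (by omega)
      have hne02 : (L[0]'(by omega) : Fin n) ≠ L[2]'(by omega) :=
        hNd 0 2 (by omega) (by omega) (by omega)
      have hne13 : (L[1]'(by omega) : Fin n) ≠ L[3]'(by omega) :=
        hNd 1 3 (by omega) (by omega) (by omega)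
      have hj3 : L[3]'(by omega) = j := by
        rw [← hj0]
        congr 1
        omega
      obtain ⟨u, hu⟩ : ∃ x, L[1]'(by omega) = x := ⟨_, rfl⟩
      obtain ⟨v, hv⟩ : ∃ x, L[2]'(by omega) = x := ⟨_, rfl⟩
      rw [hi0, hu] at hE0 a01
      rw [hu, hv] at a12
      rw [hv, hj3] at a23 hE2
      rw [hi0, hv] at hne02
      rw [hu, hj3] at hne13
      have hu_np : ¬ Pendant (DA A) u := fun hp =>
        hne02 ((sp_unique hp (adjd_symm a01)).trans (sp_unique hp a12).symm)
      have hv_np : ¬ Pendant (DA A) v := fun hp =>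
        hne13 ((sp_unique hp (adjd_symm a12)).trans (sp_unique hp a23).symm)
      have hpi : Pendant (DA A) i := (L1 hD hMmax hE0).resolve_right hu_np
      have hpj : Pendant (DA A) j := (L1 hD hMmax hE2).resolve_left hv_np
      have hspi : sp A i = u := (sp_unique hpi a01).symm
      have hspj : sp A j = v := (sp_unique hpj (adjd_symm a23)).symm
      have hcol := Xcol_pendant hX hD hpn hS0 hpj
      rw [hXentry j, hcol, Pi.smul_apply, smul_eq_mul, solv_apply_pend hpi, hspi, hspj]
      have hwst0 : wst A v u = 0 := wst_apply_neg (by rintro ⟨h, -⟩; exact hu_np h)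
      rw [hwst0]
      have hW : (∑ w, if ¬ Pendant (DA A) w then A u w *
          (if w = v then 1 / S A v else 0) else 0) = A u v * (1 / S A v) := by
        have hterm : ∀ w, (if ¬ Pendant (DA A) w then A u w *
            (if w = v then 1 / S A v else 0) else 0)
            = if w = v then A u v * (1 / S A v) else 0 := by
          intro w
          by_cases hw : w = v
          · subst hw
            rw [if_pos hv_np, if_pos rfl, if_pos rfl]
          · simp [hw]
        rw [Finset.sum_congr rfl (fun w _ => hterm w), Finset.sum_ite_eq' Finset.univ v,
          if_pos (Finset.mem_univ _)]
      rw [hW]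
      apply mul_ne_zero a23.2.1
      apply div_ne_zero ?_ (hS0 u hu_np)
      apply mul_ne_zero a01.2.1
      rw [zero_sub]
      exact neg_ne_zero.mpr (mul_ne_zero a12.2.1 (one_div_ne_zero (hS0 v hv_np)))
    · -- impossible : chains of length ≥ 5 do not exist in class 𝒟
      exfalso
      have h6 : 5 < L.length := by omega
      have hE2 : s(L[2]'(by omega), L[3]'(by omega)) ∈ M :=
        (hmemE 2 (by omega)).mpr (by decide)
      have hnp2 : ¬ Pendant (DA A) (L[2]'(by omega)) := by
        intro hp
        have h1 : L[1]'(by omega) = sp A (L[2]'(by omega)) :=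
          sp_unique hp (adjd_symm (hAdj 1 (by omega)))
        have h2 : L[3]'(by omega) = sp A (L[2]'(by omega)) :=
          sp_unique hp (hAdj 2 (by omega))
        exact hNd 1 3 (by omega) (by omega) (by omega) (h1.trans h2.symm)
      have hnp3 : ¬ Pendant (DA A) (L[3]'(by omega)) := by
        intro hp
        have h1 : L[2]'(by omega) = sp A (L[3]'(by omega)) :=
          sp_unique hp (adjd_symm (hAdj 2 (by omega)))
        have h2 : L[4]'(by omega) = sp A (L[3]'(by omega)) :=
          sp_unique hp (hAdj 3 (by omega))
        exact hNd 2 4 (by omega) (by omega) (by omega) (h1.trans h2.symm)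
      rcases L1 hD hMmax hE2 with hp | hp
      · exact hnp2 hp
      · exact hnp3 hp
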